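/- Every countable group G admits a presentation ⟨g₁, g₂, … ∣ r₁, r₂, …⟩ with countably many generators in which every relator is a word of length at most 3 in the generators (using no inverses, i.e. each relator is of the form gᵢgⱼg_k, gᵢgⱼ, or gᵢ with i < j < k), and each generator appears in only finitely many relators. -/

import Mathlib

/-- The generator with index `i` occurs as a letter of the word `w` in the free group on `ℕ`. -/
def Occurs (i : ℕ) (w : FreeGroup ℕ) : Prop := ∃ p ∈ w.toWord, p.1 = i

/-- `w` is a positive word of one of the forms `gᵢ`, `gᵢgⱼ` (`i < j`),
or `gᵢgⱼg_k` (`i < j < k`). -/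
def IsShortPosRelator (w : FreeGroup ℕ) : Prop :=
  (∃ i, w = FreeGroup.of i) ∨
  (∃ i j, i < j ∧ w = FreeGroup.of i * FreeGroup.of j) ∨
  (∃ i j k, i < j ∧ j < k ∧ w = FreeGroup.of i * FreeGroup.of j * FreeGroup.of k)

namespace SPP

lemma toWord_two (i j : ℕ) :
    (FreeGroup.of i * FreeGroup.of j).toWord = [(i,true),(j,true)] := by
  rw [FreeGroup.of, FreeGroup.of, FreeGroup.mul_mk, FreeGroup.toWord_mk]
  simp [FreeGroup.reduce]

lemma toWord_three (i j k : ℕ) :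
    (FreeGroup.of i * FreeGroup.of j * FreeGroup.of k).toWord
      = [(i,true),(j,true),(k,true)] := by
  rw [FreeGroup.of, FreeGroup.of, FreeGroup.of, FreeGroup.mul_mk, FreeGroup.mul_mk,
    FreeGroup.toWord_mk]
  simp [FreeGroup.reduce]

lemma occurs_of {i a : ℕ} (h : Occurs i (FreeGroup.of a)) : a = i := by
  simpa [Occurs, FreeGroup.toWord_of] using h

lemma occurs_two {i a b : ℕ} (h : Occurs i (FreeGroup.of a * FreeGroup.of b)) :
    a = i ∨ b = i := by
  simpa [Occurs, toWord_two] using h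

lemma occurs_three {i a b c : ℕ}
    (h : Occurs i (FreeGroup.of a * FreeGroup.of b * FreeGroup.of c)) :
    a = i ∨ b = i ∨ c = i := by
  simpa [Occurs, toWord_three] using h

lemma pair_lt_pair {e c e' c' : ℕ} (h1 : e < c) (h2 : e' < c') (h3 : c < c') :
    Nat.pair e c < Nat.pair e' c' := by
  rw [Nat.pair, Nat.pair, if_pos h1, if_pos h2]
  nlinarith

def pair2 (i j : ℕ) : FreeGroup ℕ :=
  if i < j then FreeGroup.of i * FreeGroup.of j else FreeGroup.of j * FreeGroup.of i

lemma isShort_pair2 {i j : ℕ} (h : i ≠ j) : IsShortPosRelator (pair2 i j) := by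
  unfold pair2
  rcases lt_or_gt_of_ne h with hlt | hgt
  · rw [if_pos hlt]; exact Or.inr (Or.inl ⟨i, j, hlt, rfl⟩)
  · rw [if_neg (not_lt_of_gt hgt)]; exact Or.inr (Or.inl ⟨j, i, hgt, rfl⟩)

lemma occurs_pair2 {x i j : ℕ} (h : Occurs x (pair2 i j)) : i = x ∨ j = x := by
  unfold pair2 at h
  split at h
  · exact occurs_two h
  · exact (occurs_two h).symm

variable {G : Type} [Group G]

variable (v : ℕ → G) (w : G → ℕ)

def inv' (e : ℕ) : ℕ := w ((v e)⁻¹)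

def bound (j : ℕ) : ℕ :=
  if j % 3 = 0 then (Nat.unpair (j/3)).1
  else if j % 3 = 1 then (Nat.unpair (j/3)).2
  else w ((v (Nat.unpair (j/3)).1 * v (Nat.unpair (j/3)).2)⁻¹)

def F : ℕ → ℕ
  | 0 => bound v w 0 + 1
  | (j+1) => max (F j + 1) (bound v w (j+1) + 1)

lemma F_strictMono : StrictMono (F v w) :=
  strictMono_nat_of_lt_succ fun n => by
    have : F v w n + 1 ≤ F v w (n+1) := le_max_left _ _
    omega

lemma bound_lt_F (j : ℕ) : bound v w j < F v w j := by
  cases j with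
  | zero => simp [F]
  | succ j => exact lt_of_lt_of_le (Nat.lt_succ_self _) (le_max_right _ _)

lemma le_F (j : ℕ) : j ≤ F v w j := (F_strictMono v w).le_apply

def chainRel (m : ℕ) : FreeGroup ℕ :=
  pair2 (Nat.pair (Nat.unpair (m/2)).1 ((Nat.unpair (m/2)).2 + m % 2))
        (Nat.pair (inv' v w (Nat.unpair (m/2)).1) (2 * (m/2) + 2))

def multRel (t : ℕ) : FreeGroup ℕ :=
  FreeGroup.of (Nat.pair (Nat.unpair t).1 (F v w (3*t))) *
  FreeGroup.of (Nat.pair (Nat.unpair t).2 (F v w (3*t+1))) *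
  FreeGroup.of (Nat.pair (w ((v (Nat.unpair t).1 * v (Nat.unpair t).2)⁻¹)) (F v w (3*t+2)))

def rel : ℕ → FreeGroup ℕ
  | 0 => FreeGroup.of (Nat.pair (w 1) 0)
  | (n+1) => if n % 2 = 0 then chainRel v w (n/2) else multRel v w (n/2)

lemma bound_3t (t : ℕ) : bound v w (3*t) = (Nat.unpair t).1 := by
  have h1 : (3*t) % 3 = 0 := by omega
  have h2 : (3*t) / 3 = t := by omega
  simp [bound, h1, h2]

lemma bound_3t1 (t : ℕ) : bound v w (3*t+1) = (Nat.unpair t).2 := by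
  have h1 : (3*t+1) % 3 = 1 := by omega
  have h2 : (3*t+1) / 3 = t := by omega
  simp [bound, h1, h2]

lemma bound_3t2 (t : ℕ) :
    bound v w (3*t+2) = w ((v (Nat.unpair t).1 * v (Nat.unpair t).2)⁻¹) := by
  have h1 : (3*t+2) % 3 = 2 := by omega
  have h2 : (3*t+2) / 3 = t := by omega
  simp [bound, h1, h2]

lemma isShort_multRel (t : ℕ) : IsShortPosRelator (multRel v w t) := by
  refine Or.inr (Or.inr ⟨_, _, _, ?_, ?_, rfl⟩)
  · refine pair_lt_pair ?_ ?_ ((F_strictMono v w) (by omega))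
    · have := bound_lt_F v w (3*t); rwa [bound_3t] at this
    · have := bound_lt_F v w (3*t+1); rwa [bound_3t1] at this
  · refine pair_lt_pair ?_ ?_ ((F_strictMono v w) (by omega))
    · have := bound_lt_F v w (3*t+1); rwa [bound_3t1] at this
    · have := bound_lt_F v w (3*t+2); rwa [bound_3t2] at this

lemma chain_ne (m : ℕ) :
    Nat.pair (Nat.unpair (m/2)).1 ((Nat.unpair (m/2)).2 + m % 2)
      ≠ Nat.pair (inv' v w (Nat.unpair (m/2)).1) (2 * (m/2) + 2) := by
  intro h
  have h2 := congrArg (fun x => (Nat.unpair x).2) h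
  simp only [Nat.unpair_pair] at h2
  have hc : (Nat.unpair (m/2)).2 ≤ m/2 := by
    have := Nat.right_le_pair (Nat.unpair (m/2)).1 (Nat.unpair (m/2)).2
    rwa [Nat.pair_unpair] at this
  omega

lemma rel_succ (n : ℕ) :
    rel v w (n+1) = if n % 2 = 0 then chainRel v w (n/2) else multRel v w (n/2) := rfl

lemma isShort_rel (n : ℕ) : IsShortPosRelator (rel v w n) := by
  cases n with
  | zero => exact Or.inl ⟨_, rfl⟩
  | succ n =>
    rw [rel_succ]
    split
    · exact isShort_pair2 (chain_ne v w _)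
    · exact isShort_multRel v w _

lemma finite_occurs (i : ℕ) : {n | Occurs i (rel v w n)}.Finite := by
  apply Set.Finite.subset (Set.finite_Iic (4*i+4))
  rintro n hn
  simp only [Set.mem_setOf_eq] at hn
  simp only [Set.mem_Iic]
  cases n with
  | zero => omega
  | succ n =>
    rw [rel_succ] at hn
    split at hn
    · -- chain relator, index n+1, n even, m = n/2
      rename_i hpar
      set m := n / 2 with hm
      have hp : Nat.pair (Nat.unpair (m/2)).1 (Nat.unpair (m/2)).2 = m/2 :=
        Nat.pair_unpair _
      rcases occurs_pair2 hn with h | h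
      · -- node: pair e (c + b) = i, so m/2 ≤ pair e c ≤ pair e (c+b)?? use: c+b ≤ i and e ≤ i
        have h1 : (Nat.unpair (m/2)).2 + m % 2 ≤ i := by
          rw [← h]; exact Nat.right_le_pair _ _
        have h2 : (Nat.unpair (m/2)).1 ≤ i := by
          rw [← h]; exact Nat.left_le_pair _ _
        have h3 : m/2 ≤ i := by
          calc m/2 = Nat.pair (Nat.unpair (m/2)).1 (Nat.unpair (m/2)).2 := hp.symm
            _ ≤ Nat.pair (Nat.unpair (m/2)).1 ((Nat.unpair (m/2)).2 + m % 2) := by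
                rcases Nat.eq_zero_or_pos (m % 2) with hb | hb
                · simp [hb]
                · exact le_of_lt (Nat.pair_lt_pair_right _ (by omega))
            _ = i := h
        omega
      · have h1 : 2 * (m/2) + 2 ≤ i := by
          rw [← h]; exact Nat.right_le_pair _ _
        omega
    · -- mult relator, n odd, t = n/2, n = 2t+1
      rename_i hpar
      set t := n / 2 with ht
      rcases occurs_three hn with h | h | h
      all_goals {
        have h1 : F v w (3*t) ≤ i ∨ F v w (3*t+1) ≤ i ∨ F v w (3*t+2) ≤ i := by
          first
          | exact Or.inl (by rw [← h]; exact Nat.right_le_pair _ _)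
          | exact Or.inr (Or.inl (by rw [← h]; exact Nat.right_le_pair _ _))
          | exact Or.inr (Or.inr (by rw [← h]; exact Nat.right_le_pair _ _))
        have l1 := le_F v w (3*t)
        have l2 := le_F v w (3*t+1)
        have l3 := le_F v w (3*t+2)
        omega
      }

lemma mul_eq_one_symm {H : Type*} [Group H] {a b : H} (h : a * b = 1) : b * a = 1 := by
  rw [eq_inv_of_mul_eq_one_right h, inv_mul_cancel]

def phi : FreeGroup ℕ →* G := FreeGroup.lift (fun n => v (Nat.unpair n).1)

lemma phi_of_pair (e c : ℕ) : phi v (FreeGroup.of (Nat.pair e c)) = v e := by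
  unfold phi
  rw [FreeGroup.lift_apply_of, Nat.unpair_pair]

lemma phi_pair2 {i j : ℕ} (h : phi v (FreeGroup.of i) * phi v (FreeGroup.of j) = 1) :
    phi v (pair2 i j) = 1 := by
  unfold pair2
  split
  · rw [map_mul]; exact h
  · rw [map_mul]; exact mul_eq_one_symm h

lemma phi_rel (hw : ∀ g : G, v (w g) = g) (n : ℕ) : phi v (rel v w n) = 1 := by
  cases n with
  | zero =>
    show phi v (FreeGroup.of (Nat.pair (w 1) 0)) = 1
    rw [phi_of_pair, hw]
  | succ n =>
    rw [rel_succ]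
    split
    · apply phi_pair2
      rw [phi_of_pair, phi_of_pair]
      unfold inv'
      rw [hw, mul_inv_cancel]
    · unfold multRel
      rw [map_mul, map_mul, phi_of_pair, phi_of_pair, phi_of_pair, hw, mul_inv_cancel]

/-- The normal closure of the relators. -/
def NN : Subgroup (FreeGroup ℕ) := Subgroup.normalClosure (Set.range (rel v w))

instance : (NN v w).Normal := Subgroup.normalClosure_normal

/-- The quotient map. -/
def pi : FreeGroup ℕ →* FreeGroup ℕ ⧸ NN v w := QuotientGroup.mk' (NN v w)

lemma pi_rel (n : ℕ) : pi v w (rel v w n) = 1 := by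
  refine (QuotientGroup.eq_one_iff _).2 ?_
  exact Subgroup.subset_normalClosure ⟨n, rfl⟩

/-- Class of copy `c` of code `e`. -/
def X (e c : ℕ) : FreeGroup ℕ ⧸ NN v w := pi v w (FreeGroup.of (Nat.pair e c))

lemma pi_pair2_eq_one {i j : ℕ} (h : pi v w (pair2 i j) = 1) :
    pi v w (FreeGroup.of i) * pi v w (FreeGroup.of j) = 1 := by
  unfold pair2 at h
  split at h
  · rwa [map_mul] at h
  · rw [map_mul] at h; exact mul_eq_one_symm h

lemma chain_eq_one (m : ℕ) :
    pi v w (FreeGroup.of (Nat.pair (Nat.unpair (m/2)).1 ((Nat.unpair (m/2)).2 + m % 2)))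
      * pi v w (FreeGroup.of (Nat.pair (inv' v w (Nat.unpair (m/2)).1) (2 * (m/2) + 2))) = 1 := by
  apply pi_pair2_eq_one
  show pi v w (chainRel v w m) = 1
  have h : chainRel v w m = rel v w (2*m+1) := by
    rw [rel_succ]
    have h1 : (2*m) % 2 = 0 := by omega
    have h2 : (2*m) / 2 = m := by omega
    rw [if_pos h1, h2]
  rw [h]
  exact pi_rel v w (2*m+1)

lemma X_succ (e c : ℕ) : X v w e (c+1) = X v w e c := by
  have h0 := chain_eq_one v w (2 * Nat.pair e c)
  have h1 := chain_eq_one v w (2 * Nat.pair e c + 1)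
  have e0 : (2 * Nat.pair e c) / 2 = Nat.pair e c := by omega
  have e0' : (2 * Nat.pair e c) % 2 = 0 := by omega
  have e1 : (2 * Nat.pair e c + 1) / 2 = Nat.pair e c := by omega
  have e1' : (2 * Nat.pair e c + 1) % 2 = 1 := by omega
  rw [e0, e0', Nat.unpair_pair] at h0
  rw [e1, e1', Nat.unpair_pair] at h1
  simp only at h0 h1
  have hh0 : X v w e c
      = (pi v w (FreeGroup.of (Nat.pair (inv' v w e) (2 * Nat.pair e c + 2))))⁻¹ := by
    apply eq_inv_of_mul_eq_one_left
    exact h0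
  have hh1 : X v w e (c+1)
      = (pi v w (FreeGroup.of (Nat.pair (inv' v w e) (2 * Nat.pair e c + 2))))⁻¹ := by
    apply eq_inv_of_mul_eq_one_left
    exact h1
  rw [hh0, hh1]

lemma X_eq (e c : ℕ) : X v w e c = X v w e 0 := by
  induction c with
  | zero => rfl
  | succ c ih => rw [X_succ, ih]

/-- Class of the canonical copy of code `e`. -/
def Y (e : ℕ) : FreeGroup ℕ ⧸ NN v w := X v w e 0

lemma pi_of (n : ℕ) : pi v w (FreeGroup.of n) = Y v w (Nat.unpair n).1 := by
  unfold Y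
  rw [← X_eq v w _ (Nat.unpair n).2]
  unfold X
  rw [Nat.pair_unpair]

lemma Y_mult (a b : ℕ) :
    Y v w a * Y v w b * Y v w (w ((v a * v b)⁻¹)) = 1 := by
  have hrel : multRel v w (Nat.pair a b) = rel v w (2 * Nat.pair a b + 2) := by
    rw [rel_succ]
    have h2 : (2 * Nat.pair a b + 1) / 2 = Nat.pair a b := by omega
    rw [if_neg (by omega), h2]
  have h := pi_rel v w (2 * Nat.pair a b + 2)
  rw [← hrel] at h
  unfold multRel at h
  rw [map_mul, map_mul, pi_of, pi_of, pi_of] at h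
  simpa only [Nat.unpair_pair] using h

lemma Y_one : Y v w (w 1) = 1 := by
  have h := pi_rel v w 0
  rw [show rel v w 0 = FreeGroup.of (Nat.pair (w 1) 0) from rfl, pi_of,
    Nat.unpair_pair] at h
  exact h

variable {v} {w}

lemma Y_inv (hw : ∀ g : G, v (w g) = g) (e : ℕ) :
    Y v w e * Y v w (inv' v w e) = 1 := by
  have h := Y_mult v w e (inv' v w e)
  unfold inv' at h ⊢
  rw [hw, mul_inv_cancel, inv_one, Y_one, mul_one] at h
  exact h

lemma Y_canon (hw : ∀ g : G, v (w g) = g) (e : ℕ) : Y v w (w (v e)) = Y v w e := by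
  have h1 := Y_inv hw e
  have h2 : Y v w (w (v e)) * Y v w (inv' v w e) = 1 := by
    have h := Y_mult v w (w (v e)) (inv' v w e)
    unfold inv' at h ⊢
    rw [hw, hw, mul_inv_cancel, inv_one, Y_one, mul_one] at h
    exact h
  rw [eq_inv_of_mul_eq_one_left h1, eq_inv_of_mul_eq_one_left h2]

lemma Y_w_mul (hw : ∀ g : G, v (w g) = g) (g h : G) :
    Y v w (w g) * Y v w (w h) = Y v w (w (g * h)) := by
  have h1 := Y_mult v w (w g) (w h)
  rw [hw, hw] at h1
  have h2 := Y_mult v w (w (g*h)) (w ((g*h)⁻¹))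
  rw [hw, hw, mul_inv_cancel, inv_one, Y_one, mul_one] at h2
  rw [eq_inv_of_mul_eq_one_left h1, eq_inv_of_mul_eq_one_left h2]

/-- The homomorphism `G →* Q`. -/
def rho (hw : ∀ g : G, v (w g) = g) : G →* FreeGroup ℕ ⧸ NN v w :=
  MonoidHom.mk' (fun g => Y v w (w g)) (fun g h => (Y_w_mul hw g h).symm)

/-- The homomorphism `Q →* G`. -/
def psi (hw : ∀ g : G, v (w g) = g) : (FreeGroup ℕ ⧸ NN v w) →* G :=
  QuotientGroup.lift (NN v w) (phi v)
    (Subgroup.normalClosure_le_normal (by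
      rintro x ⟨n, rfl⟩
      exact MonoidHom.mem_ker.2 (phi_rel v w hw n)))

lemma psi_pi (hw : ∀ g : G, v (w g) = g) (x : FreeGroup ℕ) :
    psi hw (pi v w x) = phi v x := rfl

lemma psi_rho (hw : ∀ g : G, v (w g) = g) (g : G) : psi hw (rho hw g) = g := by
  show psi hw (Y v w (w g)) = g
  have h : Y v w (w g) = pi v w (FreeGroup.of (Nat.pair (w g) 0)) := rfl
  rw [h, psi_pi, phi_of_pair, hw]

lemma rho_psi (hw : ∀ g : G, v (w g) = g) (q : FreeGroup ℕ ⧸ NN v w) :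
    (rho hw) (psi hw q) = q := by
  obtain ⟨x, rfl⟩ := QuotientGroup.mk'_surjective (NN v w) q
  have key : ((rho hw).comp (psi hw)).comp (pi v w) = pi v w := by
    apply FreeGroup.ext_hom
    intro n
    show rho hw (psi hw (pi v w (FreeGroup.of n))) = pi v w (FreeGroup.of n)
    rw [psi_pi]
    show Y v w (w (phi v (FreeGroup.of n))) = _
    rw [show phi v (FreeGroup.of n) = v (Nat.unpair n).1 from FreeGroup.lift_apply_of,
      Y_canon hw, pi_of]
  exact DFunLike.congr_fun key x

/-- The isomorphism. -/
noncomputable def mainEquiv (hw : ∀ g : G, v (w g) = g) :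
    G ≃* FreeGroup ℕ ⧸ NN v w :=
  { toFun := rho hw
    invFun := psi hw
    left_inv := psi_rho hw
    right_inv := rho_psi hw
    map_mul' := (rho hw).map_mul }

end SPP

/-- Every countable group admits a presentation with countably many generators in which every
relator is of the form `gᵢgⱼg_k`, `gᵢgⱼ` or `gᵢ` with `i < j < k`, and each generator appears
in only finitely many relators. -/
theorem countable_group_short_positive_presentation
    (G : Type) [Group G] [Countable G] :
    ∃ r : ℕ → FreeGroup ℕ,
      (∀ n, IsShortPosRelator (r n)) ∧
      (∀ i, {n | Occurs i (r n)}.Finite) ∧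
      Nonempty (G ≃* FreeGroup ℕ ⧸ Subgroup.normalClosure (Set.range r)) := by
  obtain ⟨v, hv⟩ := exists_surjective_nat G
  have hw : ∀ g : G, v (Function.surjInv hv g) = g := fun g => Function.surjInv_eq hv g
  exact ⟨SPP.rel v (Function.surjInv hv), SPP.isShort_rel v _, SPP.finite_occurs v _,
    ⟨SPP.mainEquiv hw⟩⟩
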